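/- Let n_r ≥ 2 be even, let l_s, l_d ≥ 0, l^{(s)} > 0, and ζ_1, ζ_2 ∈ ℝ. Let \bar{L} ∈ ℝ^{n_r×n_r} be the matrix with diagonal entries \bar{L}_{ii} = (n_r/2 − 1) l_s + (n_r/2) l_d + l^{(s)}, off-diagonal entries \bar{L}_{ij} = −l_s if i ≠ j lie in the same half ({1,…,n_r/2} or {n_r/2+1,…,n_r}), and \bar{L}_{ij} = −l_d if they lie in different halves. Let v ∈ ℝ^{n_r} have v_i = ζ_1 for i ≤ n_r/2 and v_i = ζ_2 otherwise. Then: (a) \bar{L} is positive definite; (b) the unique solution u of \bar{L} u = v has the block-constant form u_i = x̄_1 for i ≤ n_r/2 and u_i = x̄_2 for i > n_r/2, where x̄_1 + x̄_2 = (ζ_1 + ζ_2)/l^{(s)} and x̄_1 − x̄_2 = (ζ_1 − ζ_2)/(l^{(s)} + n_r l_d); in particular x̄_1 ≠ x̄_2 if and only if ζ_1 ≠ ζ_2. -/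

import Mathlib

/-- The grounded Laplacian of the averaged graph of a two-community SBM-S with
`n_r = 2m` regular agents: diagonal entries `(m−1)l_s + m·l_d + l⁽ˢ⁾`, off-diagonal
entries `−l_s` within a half and `−l_d` across the halves. -/
noncomputable def avgGroundedLaplacian (m : ℕ) (ls ld lS : ℝ) :
    Matrix (Fin (2 * m)) (Fin (2 * m)) ℝ :=
  Matrix.of fun i j : Fin (2 * m) =>
    if i = j then ((m : ℝ) - 1) * ls + (m : ℝ) * ld + lS
    else if ((i : ℕ) < m ↔ (j : ℕ) < m) then -ls else -ld

namespace AvgGL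

lemma card_first (m : ℕ) :
    (Finset.univ.filter fun j : Fin (2*m) => (j:ℕ) < m).card = m := by
  have h : ∀ k ∈ Finset.range m, k < 2*m := fun k hk => by
    have := Finset.mem_range.mp hk; omega
  have he : (Finset.univ.filter fun j : Fin (2*m) => (j:ℕ) < m)
      = (Finset.range m).attachFin h := by
    ext j
    simp [Finset.mem_attachFin, Finset.mem_range]
  rw [he, Finset.card_attachFin, Finset.card_range]

lemma card_second (m : ℕ) :
    (Finset.univ.filter fun j : Fin (2*m) => ¬ (j:ℕ) < m).card = m := by
  have h := Finset.card_filter_add_card_filter_not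
    (s := (Finset.univ : Finset (Fin (2*m)))) (p := fun j : Fin (2*m) => (j:ℕ) < m)
  rw [card_first] at h
  simp only [Finset.card_univ, Fintype.card_fin] at h
  omega

lemma sum_if_first (m : ℕ) (c : ℝ) :
    (∑ j : Fin (2*m), if (j:ℕ) < m then c else 0) = m * c := by
  rw [← Finset.sum_filter, Finset.sum_const, card_first, nsmul_eq_mul]

lemma sum_if_second (m : ℕ) (c : ℝ) :
    (∑ j : Fin (2*m), if (j:ℕ) < m then 0 else c) = m * c := by
  have : ∀ j : Fin (2*m), (if (j:ℕ) < m then (0:ℝ) else c) = if ¬ (j:ℕ) < m then c else 0 := by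
    intro j; by_cases h : (j:ℕ) < m <;> simp [h]
  simp only [this]
  rw [← Finset.sum_filter, Finset.sum_const, card_second, nsmul_eq_mul]

lemma mulVec_apply (m : ℕ) (ls ld lS : ℝ) (x : Fin (2*m) → ℝ) (i : Fin (2*m)) :
    (avgGroundedLaplacian m ls ld lS).mulVec x i =
      ((m:ℝ)*ls + (m:ℝ)*ld + lS) * x i
        + (if (i:ℕ) < m
            then -(ls * (∑ j : Fin (2*m), if (j:ℕ) < m then x j else 0)) - ld * (∑ j : Fin (2*m), if (j:ℕ) < m then 0 else x j)
            else -(ld * (∑ j : Fin (2*m), if (j:ℕ) < m then x j else 0)) - ls * (∑ j : Fin (2*m), if (j:ℕ) < m then 0 else x j)) := by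
  have key : ∀ j : Fin (2*m),
      (avgGroundedLaplacian m ls ld lS) i j * x j
      = (if i = j then ((m:ℝ)*ls + (m:ℝ)*ld + lS) * x j else 0)
        + (if (i:ℕ) < m then (if (j:ℕ) < m then -(ls * x j) else -(ld * x j))
           else (if (j:ℕ) < m then -(ld * x j) else -(ls * x j))) := by
    intro j
    unfold avgGroundedLaplacian
    by_cases h1 : i = j
    · subst h1
      by_cases h2 : (i:ℕ) < m <;> simp [h2] <;> ring
    · by_cases h2 : (i:ℕ) < m <;> by_cases h3 : (j:ℕ) < m <;>
        simp [h1, h2, h3]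
  show (∑ j, (avgGroundedLaplacian m ls ld lS) i j * x j) = _
  simp only [key, Finset.sum_add_distrib, Finset.sum_ite_eq, Finset.mem_univ, if_true]
  congr 1
  by_cases h2 : (i:ℕ) < m <;> simp only [h2, if_true, if_false]
  · have : ∀ j : Fin (2*m), (if (j:ℕ) < m then -(ls * x j) else -(ld * x j))
        = -(ls * (if (j:ℕ) < m then x j else 0)) + -(ld * (if (j:ℕ) < m then 0 else x j)) := by
      intro j; by_cases h : (j:ℕ) < m <;> simp [h]
    simp only [this, Finset.sum_add_distrib, Finset.sum_neg_distrib, ← Finset.mul_sum]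
    ring
  · have : ∀ j : Fin (2*m), (if (j:ℕ) < m then -(ld * x j) else -(ls * x j))
        = -(ld * (if (j:ℕ) < m then x j else 0)) + -(ls * (if (j:ℕ) < m then 0 else x j)) := by
      intro j; by_cases h : (j:ℕ) < m <;> simp [h]
    simp only [this, Finset.sum_add_distrib, Finset.sum_neg_distrib, ← Finset.mul_sum]
    ring


lemma quad (m : ℕ) (ls ld lS : ℝ) (x : Fin (2*m) → ℝ) :
    dotProduct x ((avgGroundedLaplacian m ls ld lS).mulVec x) =
      ((m:ℝ)*ls + (m:ℝ)*ld + lS) * ((∑ j : Fin (2*m), if (j:ℕ) < m then x j ^ 2 else 0)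
          + (∑ j : Fin (2*m), if (j:ℕ) < m then 0 else x j ^ 2))
        - ls * (∑ j : Fin (2*m), if (j:ℕ) < m then x j else 0) ^ 2
        - ls * (∑ j : Fin (2*m), if (j:ℕ) < m then 0 else x j) ^ 2
        - 2 * ld * (∑ j : Fin (2*m), if (j:ℕ) < m then x j else 0)
            * (∑ j : Fin (2*m), if (j:ℕ) < m then 0 else x j) := by
  set S1 := (∑ j : Fin (2*m), if (j:ℕ) < m then x j else 0) with hS1
  set S2 := (∑ j : Fin (2*m), if (j:ℕ) < m then 0 else x j) with hS2
  have key : ∀ i : Fin (2*m), x i * (avgGroundedLaplacian m ls ld lS).mulVec x i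
      = ((m:ℝ)*ls + (m:ℝ)*ld + lS) * ((if (i:ℕ) < m then x i ^ 2 else 0) + (if (i:ℕ) < m then 0 else x i ^ 2))
        + ((-(ls * S1) - ld * S2) * (if (i:ℕ) < m then x i else 0)
           + (-(ld * S1) - ls * S2) * (if (i:ℕ) < m then 0 else x i)) := by
    intro i
    rw [mulVec_apply]
    by_cases h : (i:ℕ) < m <;> simp [h] <;> ring
  show (∑ i, x i * (avgGroundedLaplacian m ls ld lS).mulVec x i) = _
  simp only [key, Finset.sum_add_distrib, ← Finset.mul_sum, ← hS1, ← hS2]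
  ring

lemma posdef (m : ℕ) (hm : 1 ≤ m) (ls ld lS : ℝ)
    (hls : 0 ≤ ls) (hld : 0 ≤ ld) (hlS : 0 < lS) :
    (avgGroundedLaplacian m ls ld lS).PosDef := by
  rw [Matrix.posDef_iff_dotProduct_mulVec]
  constructor
  · ext i j
    simp only [avgGroundedLaplacian, Matrix.conjTranspose_apply, Matrix.of_apply, star_trivial]
    by_cases h1 : i = j
    · simp [h1]
    · have h1' : ¬ j = i := fun h => h1 h.symm
      by_cases h2 : (i:ℕ) < m <;> by_cases h3 : (j:ℕ) < m <;> simp [h1, h1', h2, h3]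
  · intro x hx
    have hsx : star x = x := funext fun i => star_trivial _
    rw [hsx, quad]
    set S1 := (∑ j : Fin (2*m), if (j:ℕ) < m then x j else 0) with hS1
    set S2 := (∑ j : Fin (2*m), if (j:ℕ) < m then 0 else x j) with hS2
    set Q1 := (∑ j : Fin (2*m), if (j:ℕ) < m then x j ^ 2 else 0) with hQ1
    set Q2 := (∑ j : Fin (2*m), if (j:ℕ) < m then 0 else x j ^ 2) with hQ2
    have hc1 : S1 ^ 2 ≤ (m:ℝ) * Q1 := by
      rw [hS1, hQ1, ← Finset.sum_filter, ← Finset.sum_filter]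
      have := sq_sum_le_card_mul_sum_sq
        (s := Finset.univ.filter fun j : Fin (2*m) => (j:ℕ) < m) (f := x)
      rwa [card_first] at this
    have hc2 : S2 ^ 2 ≤ (m:ℝ) * Q2 := by
      have e1 : S2 = ∑ j ∈ (Finset.univ.filter fun j : Fin (2*m) => ¬ (j:ℕ) < m), x j := by
        rw [Finset.sum_filter, hS2]
        exact Finset.sum_congr rfl fun j _ => by by_cases h : (j:ℕ) < m <;> simp [h]
      have e2 : Q2 = ∑ j ∈ (Finset.univ.filter fun j : Fin (2*m) => ¬ (j:ℕ) < m), x j ^ 2 := by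
        rw [Finset.sum_filter, hQ2]
        exact Finset.sum_congr rfl fun j _ => by by_cases h : (j:ℕ) < m <;> simp [h]
      rw [e1, e2]
      have := sq_sum_le_card_mul_sum_sq
        (s := Finset.univ.filter fun j : Fin (2*m) => ¬ (j:ℕ) < m) (f := x)
      rwa [card_second] at this
    have hQpos : 0 < Q1 + Q2 := by
      have hQeq : Q1 + Q2 = ∑ j : Fin (2*m), x j ^ 2 := by
        rw [hQ1, hQ2, ← Finset.sum_add_distrib]
        exact Finset.sum_congr rfl fun j _ => by by_cases h : (j:ℕ) < m <;> simp [h]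
      rw [hQeq]
      obtain ⟨i, hi⟩ := Function.ne_iff.mp hx
      exact Finset.sum_pos' (fun j _ => sq_nonneg _)
        ⟨i, Finset.mem_univ i, lt_of_le_of_ne (sq_nonneg _) (Ne.symm (pow_ne_zero 2 hi))⟩
    have hm1 : (1:ℝ) ≤ (m:ℝ) := by exact_mod_cast hm
    nlinarith [mul_nonneg hls (sub_nonneg.mpr hc1), mul_nonneg hls (sub_nonneg.mpr hc2),
      sq_nonneg (S1 - S2), mul_nonneg hld (sub_nonneg.mpr hc1), mul_nonneg hld (sub_nonneg.mpr hc2),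
      mul_nonneg hld (sq_nonneg (S1 - S2)), mul_pos hlS hQpos]


lemma inj (m : ℕ) (hm : 1 ≤ m) (ls ld lS : ℝ)
    (hls : 0 ≤ ls) (hld : 0 ≤ ld) (hlS : 0 < lS) {u w : Fin (2*m) → ℝ}
    (h : (avgGroundedLaplacian m ls ld lS).mulVec u = (avgGroundedLaplacian m ls ld lS).mulVec w) :
    u = w := by
  by_contra hne
  have hy : u - w ≠ 0 := sub_ne_zero.mpr hne
  have h0 : (avgGroundedLaplacian m ls ld lS).mulVec (u - w) = 0 := by
    rw [Matrix.mulVec_sub, h, sub_self]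
  have := (posdef m hm ls ld lS hls hld hlS).dotProduct_mulVec_pos hy
  rw [h0, dotProduct_zero] at this
  exact lt_irrefl 0 this

end AvgGL

/-- the averaged grounded Laplacian `L̄` is positive definite, and every
solution `u` of `L̄ u = v`, where `v` equals `ζ₁` on the first half and `ζ₂` on the
second half, is block-constant with values `x̄₁, x̄₂` satisfying
`x̄₁ + x̄₂ = (ζ₁ + ζ₂)/l⁽ˢ⁾` and `x̄₁ − x̄₂ = (ζ₁ − ζ₂)/(l⁽ˢ⁾ + n_r·l_d)`;
in particular `x̄₁ ≠ x̄₂` iff `ζ₁ ≠ ζ₂`. -/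
theorem avgGroundedLaplacian_posDef_and_solution (m : ℕ) (hm : 1 ≤ m)
    (ls ld lS : ℝ) (hls : 0 ≤ ls) (hld : 0 ≤ ld) (hlS : 0 < lS) (ζ₁ ζ₂ : ℝ) :
    (avgGroundedLaplacian m ls ld lS).PosDef ∧
    ∀ u : Fin (2 * m) → ℝ,
      (avgGroundedLaplacian m ls ld lS).mulVec u =
        (fun i : Fin (2 * m) => if (i : ℕ) < m then ζ₁ else ζ₂) →
      ∃ x₁ x₂ : ℝ,
        (∀ i : Fin (2 * m), u i = if (i : ℕ) < m then x₁ else x₂) ∧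
        x₁ + x₂ = (ζ₁ + ζ₂) / lS ∧
        x₁ - x₂ = (ζ₁ - ζ₂) / (lS + (2 * m : ℕ) * ld) ∧
        (x₁ ≠ x₂ ↔ ζ₁ ≠ ζ₂) := by
  refine ⟨AvgGL.posdef m hm ls ld lS hls hld hlS, ?_⟩
  intro u hu
  have hmld : (0:ℝ) < lS + 2 * m * ld := by
    have : (0:ℝ) ≤ 2 * m * ld := by positivity
    linarith
  set x₁ : ℝ := ((ζ₁ + ζ₂) / lS + (ζ₁ - ζ₂) / (lS + 2 * m * ld)) / 2 with hx1
  set x₂ : ℝ := ((ζ₁ + ζ₂) / lS - (ζ₁ - ζ₂) / (lS + 2 * m * ld)) / 2 with hx2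
  set w : Fin (2*m) → ℝ := fun i => if (i:ℕ) < m then x₁ else x₂ with hw
  have hS1 : (∑ j : Fin (2*m), if (j:ℕ) < m then w j else 0) = m * x₁ := by
    rw [show (∑ j : Fin (2*m), if (j:ℕ) < m then w j else 0)
        = (∑ j : Fin (2*m), if (j:ℕ) < m then x₁ else 0) from
      Finset.sum_congr rfl fun j _ => by by_cases h : (j:ℕ) < m <;> simp [hw, h]]
    exact AvgGL.sum_if_first m x₁
  have hS2 : (∑ j : Fin (2*m), if (j:ℕ) < m then 0 else w j) = m * x₂ := by
    rw [show (∑ j : Fin (2*m), if (j:ℕ) < m then 0 else w j)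
        = (∑ j : Fin (2*m), if (j:ℕ) < m then 0 else x₂) from
      Finset.sum_congr rfl fun j _ => by by_cases h : (j:ℕ) < m <;> simp [hw, h]]
    exact AvgGL.sum_if_second m x₂
  have hmw : (avgGroundedLaplacian m ls ld lS).mulVec w =
      (fun i : Fin (2 * m) => if (i : ℕ) < m then ζ₁ else ζ₂) := by
    funext i
    rw [AvgGL.mulVec_apply, hS1, hS2]
    by_cases h : (i:ℕ) < m <;> simp only [hw, h, if_true, if_false]
    · rw [hx1, hx2]
      field_simp
      ring
    · rw [hx1, hx2]
      field_simp
      ring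
  have huw : u = w := AvgGL.inj m hm ls ld lS hls hld hlS (hu.trans hmw.symm)
  refine ⟨x₁, x₂, fun i => by rw [huw], ?_, ?_, ?_⟩
  · rw [hx1, hx2]; field_simp; ring
  · rw [hx1, hx2]
    push_cast
    field_simp
    ring
  · constructor
    · intro h hz
      apply h
      rw [hx1, hx2, hz]; ring
    · intro h hx
      apply h
      have : x₁ - x₂ = (ζ₁ - ζ₂) / (lS + 2 * m * ld) := by rw [hx1, hx2]; ring
      rw [hx, sub_self] at this
      have := (div_eq_zero_iff.mp this.symm).resolve_right (ne_of_gt hmld)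
      linarith
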